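/- arXiv:2503.02211 — 2 statements merged into one kernel-verified Lean document; each statement's English description precedes it below -/
import Mathlib

section
/- Let α₂, α₃ ∈ ℝ with 0 < α₂ < α₃, and define ω₊ = (√(4+α₃²−α₂²) + √(α₃²−α₂²))/2, ω₋ = 1/ω₊, τⱼ⁺ = (2π − arccos(α₂/α₃) + 2πj)/ω₊ and τⱼ⁻ = (arccos(α₂/α₃) + 2πj)/ω₋ for j ∈ ℕ. Then λ = iω₊ is a root of λ² + α₂λ + 1 − α₃λe^{−λτⱼ⁺} = 0 and λ = iω₋ is a root of λ² + α₂λ + 1 − α₃λe^{−λτⱼ⁻} = 0, for each j. -/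
open Complex

lemma key_root (α₂ α₃ ω τ : ℝ)
    (hc : α₃ * Real.cos (ω * τ) = α₂)
    (hs : α₃ * ω * Real.sin (ω * τ) = 1 - ω ^ 2) :
    (Complex.I * ω)^2 + α₂ * (Complex.I * ω) + 1
      - α₃ * (Complex.I * ω) * Complex.exp (-(Complex.I * ω) * τ) = 0 := by
  have hexp : Complex.exp (-(Complex.I * ω) * τ)
      = (Real.cos (ω*τ) : ℂ) - (Real.sin (ω*τ) : ℂ) * Complex.I := by
    rw [show (-(Complex.I*(ω:ℂ))*τ) = ((-(ω*τ):ℝ):ℂ)*Complex.I by push_cast; ring,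
      Complex.exp_mul_I, Complex.ofReal_neg, Complex.cos_neg, Complex.sin_neg,
      ← Complex.ofReal_cos, ← Complex.ofReal_sin]
    ring
  have hc' : (α₃:ℂ) * (Real.cos (ω*τ) : ℂ) = α₂ := by exact_mod_cast hc
  have hs' : (α₃:ℂ) * ω * (Real.sin (ω*τ) : ℂ) = 1 - (ω:ℂ)^2 := by exact_mod_cast hs
  rw [hexp]
  linear_combination (-1:ℂ) * hs' - Complex.I * (ω:ℂ) * hc'
    + ((ω:ℂ) * α₃ * (Real.sin (ω*τ):ℂ) + (ω:ℂ)^2) * Complex.I_sq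

theorem critical_delays_give_imaginary_roots (α₂ α₃ : ℝ) (h2 : 0 < α₂) (h23 : α₂ < α₃)
    (ωp ωm : ℝ)
    (hp : ωp = (Real.sqrt (4 + α₃^2 - α₂^2) + Real.sqrt (α₃^2 - α₂^2)) / 2)
    (hm : ωm = 1 / ωp) (j : ℕ) :
    (let τ : ℝ := (2 * Real.pi - Real.arccos (α₂ / α₃) + 2 * Real.pi * j) / ωp
     (Complex.I * ωp)^2 + α₂ * (Complex.I * ωp) + 1
       - α₃ * (Complex.I * ωp) * Complex.exp (-(Complex.I * ωp) * τ) = 0) ∧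
    (let τ : ℝ := (Real.arccos (α₂ / α₃) + 2 * Real.pi * j) / ωm
     (Complex.I * ωm)^2 + α₂ * (Complex.I * ωm) + 1
       - α₃ * (Complex.I * ωm) * Complex.exp (-(Complex.I * ωm) * τ) = 0) := by
  have h3 : 0 < α₃ := h2.trans h23
  set d : ℝ := α₃^2 - α₂^2 with hd
  have h4d : 4 + α₃^2 - α₂^2 = 4 + d := by rw [hd]; ring
  rw [h4d] at hp
  have hdpos : 0 < d := by nlinarith
  have hsd : Real.sqrt d ^ 2 = d := Real.sq_sqrt hdpos.le
  have hs4 : Real.sqrt (4 + d) ^ 2 = 4 + d := Real.sq_sqrt (by linarith)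
  have hωp_pos : 0 < ωp := by
    have h1 : 0 < Real.sqrt (4 + d) := Real.sqrt_pos.mpr (by linarith)
    have h2 := Real.sqrt_nonneg d
    rw [hp]; linarith
  have hkey_p : ωp ^ 2 - 1 = Real.sqrt d * ωp := by
    rw [hp]; nlinarith [hsd, hs4]
  have hωm_pos : 0 < ωm := by rw [hm]; positivity
  have hωm : ωm * ωp = 1 := by rw [hm]; field_simp
  have hkey_m : ωm ^ 2 - 1 = -(Real.sqrt d * ωm) := by
    have h1 : (ωm ^ 2 - 1 + Real.sqrt d * ωm) * ωp ^ 2 = 0 := by nlinarith [hkey_p]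
    have h2 : (0:ℝ) < ωp ^ 2 := by positivity
    rcases mul_eq_zero.mp h1 with h | h
    · linarith
    · linarith
  set θ := Real.arccos (α₂ / α₃) with hθ
  have hrat1 : (-1:ℝ) ≤ α₂ / α₃ := le_trans (by norm_num) (le_of_lt (div_pos h2 h3))
  have hrat2 : α₂ / α₃ ≤ 1 := by rw [div_le_one h3]; linarith
  have hcosθ : Real.cos θ = α₂ / α₃ := Real.cos_arccos hrat1 hrat2
  have hsinθ : Real.sin θ = Real.sqrt d / α₃ := by
    rw [hθ, Real.sin_arccos,
      show 1 - (α₂/α₃)^2 = d / α₃^2 by field_simp [hd]; exact hd.symm,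
      Real.sqrt_div hdpos.le, Real.sqrt_sq h3.le]
  constructor
  · intro τ
    apply key_root
    · have hang : ωp * τ = -θ + (j+1 : ℕ) * (2 * Real.pi) := by
        show ωp * ((2 * Real.pi - θ + 2 * Real.pi * j) / ωp) = _
        field_simp
        push_cast; ring
      rw [hang, Real.cos_add_nat_mul_two_pi, Real.cos_neg, hcosθ]
      field_simp
    · have hang : ωp * τ = -θ + (j+1 : ℕ) * (2 * Real.pi) := by
        show ωp * ((2 * Real.pi - θ + 2 * Real.pi * j) / ωp) = _
        field_simp
        push_cast; ring
      rw [hang, Real.sin_add_nat_mul_two_pi, Real.sin_neg, hsinθ]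
      field_simp
      linear_combination hkey_p
  · intro τ
    apply key_root
    · have hang : ωm * τ = θ + (j : ℕ) * (2 * Real.pi) := by
        show ωm * ((θ + 2 * Real.pi * j) / ωm) = _
        field_simp
      rw [hang, Real.cos_add_nat_mul_two_pi, hcosθ]
      field_simp
    · have hang : ωm * τ = θ + (j : ℕ) * (2 * Real.pi) := by
        show ωm * ((θ + 2 * Real.pi * j) / ωm) = _
        field_simp
      rw [hang, Real.sin_add_nat_mul_two_pi, hsinθ]
      field_simp
      linear_combination hkey_m
end

section
/- Let α₂, α₃ > 0 with α₃ < α₂. Then for every τ ≥ 0, the characteristic equation λ² + α₂λ + 1 − α₃λe^{−λτ} = 0 has no purely imaginary root. -/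
theorem no_purely_imaginary_root (α₂ α₃ : ℝ) (h2 : 0 < α₂) (h3 : 0 < α₃)
    (h32 : α₃ < α₂) (τ : ℝ) (hτ : 0 ≤ τ) :
    ∀ ω : ℝ, ω ≠ 0 →
      (Complex.I * ω)^2 + (α₂ : ℂ) * (Complex.I * ω) + 1
        - (α₃ : ℂ) * (Complex.I * ω) * Complex.exp (-(Complex.I * ω) * τ) ≠ 0 := by
  intro ω hω heq
  have h := congrArg Complex.im heq
  simp [Complex.exp_im, Complex.exp_re, Complex.mul_im, Complex.mul_re,
    Complex.I_re, Complex.I_im, Complex.ofReal_re, Complex.ofReal_im, pow_two] at h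
  have hc1 : Real.cos (ω * τ) ≤ 1 := Real.cos_le_one _
  have hc2 : -1 ≤ Real.cos (ω * τ) := Real.neg_one_le_cos _
  rcases lt_or_gt_of_ne hω with hneg | hpos
  · nlinarith [mul_le_mul_of_nonpos_left hc1 (mul_nonpos_of_nonneg_of_nonpos h3.le hneg.le),
      mul_lt_mul_of_neg_right h32 hneg]
  · nlinarith [mul_le_mul_of_nonneg_left hc1 (mul_pos h3 hpos).le,
      mul_lt_mul_of_pos_right h32 hpos]
end
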